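/- If I is an irreducible ideal of a numerical semigroup Λ and the graph G_I(Λ) has at least 3 vertices, then G_I(Λ) is not a complete graph. -/

import Mathlib

/-- A numerical semigroup: a cofinite additive submonoid of ℕ. -/
def IsNumericalSemigroup (Λ : Set ℕ) : Prop :=
  0 ∈ Λ ∧ (∀ a ∈ Λ, ∀ b ∈ Λ, a + b ∈ Λ) ∧ (Λᶜ).Finite

/-- An ideal of a numerical semigroup: a nonempty subset `I ⊆ Λ` with `I + Λ ⊆ I`. -/
def IsIdeal (Λ I : Set ℕ) : Prop :=
  I.Nonempty ∧ I ⊆ Λ ∧ ∀ i ∈ I, ∀ s ∈ Λ, i + s ∈ I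

/-- An irreducible ideal: one that is not the intersection of two proper ideals
each properly containing it. -/
def IsIrreducibleIdeal (Λ I : Set ℕ) : Prop :=
  IsIdeal Λ I ∧
    ¬ ∃ J K : Set ℕ, IsIdeal Λ J ∧ IsIdeal Λ K ∧ J ≠ Λ ∧ K ≠ Λ ∧
      I ⊂ J ∧ I ⊂ K ∧ I = J ∩ K

/-- The graph `G_I(Λ)`: vertices are the nonzero elements of `Λ \ I`,
and `x ~ y` iff `x + y ∈ I`. -/
def semigroupGraph (Λ I : Set ℕ) : SimpleGraph ↥((Λ \ I) \ {0}) where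
  Adj x y := (x : ℕ) ≠ (y : ℕ) ∧ (x : ℕ) + (y : ℕ) ∈ I
  symm := by
    constructor; intro x y h
    exact ⟨fun e => h.1 e.symm, by rw [add_comm]; exact h.2⟩
  loopless := by constructor; intro x h; exact h.1 rfl

/-- `B(x) = {y ∈ Λ : x - y ∈ Λ}` (i.e. `y + z = x` for some `z ∈ Λ`). -/
def Bset (Λ : Set ℕ) (x : ℕ) : Set ℕ :=
  {y ∈ Λ | ∃ z ∈ Λ, y + z = x}

/-- The minimal generating set of a numerical semigroup: the nonzero elements
that are not sums of two nonzero elements. -/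
def MinimalGenerators (Λ : Set ℕ) : Set ℕ :=
  {a ∈ Λ | a ≠ 0 ∧ ¬ ∃ b ∈ Λ, ∃ c ∈ Λ, b ≠ 0 ∧ c ≠ 0 ∧ a = b + c}

/-- `L_x^{(p)}`: representations of `x` as a positive-integer combination of
exactly `p` distinct minimal generators of `Λ`, encoded as finitely supported
functions from generators to positive coefficients. -/
def Lrep (Λ : Set ℕ) (x : ℕ) (p : ℕ) : Set (ℕ →₀ ℕ) :=
  {u | (↑u.support : Set ℕ) ⊆ MinimalGenerators Λ ∧ u.support.card = p ∧
    u.sum (fun a c => c * a) = x}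

/-- `G` contains a subdivision of `H`: branch vertices joined by internally
disjoint paths. -/
def SimpleGraph.ContainsSubdivision {V W : Type*} (G : SimpleGraph V)
    (H : SimpleGraph W) : Prop :=
  ∃ b : W ↪ V, ∃ P : ∀ i j : W, H.Adj i j → G.Walk (b i) (b j),
    (∀ i j (h : H.Adj i j), (P i j h).IsPath) ∧
    (∀ i j (h : H.Adj i j) (k : W), b k ∈ (P i j h).support → k = i ∨ k = j) ∧
    (∀ i j (h : H.Adj i j) (i' j' : W) (h' : H.Adj i' j'),
      ({i, j} : Set W) ≠ {i', j'} →
      ∀ v, v ∈ (P i j h).support → v ∈ (P i' j' h').support →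
        v = b i ∨ v = b j)

/-- Planarity via Kuratowski's criterion: no subgraph homeomorphic to
`K₅` or `K₃,₃`. -/
def SimpleGraph.Planar {V : Type*} (G : SimpleGraph V) : Prop :=
  ¬ G.ContainsSubdivision (⊤ : SimpleGraph (Fin 5)) ∧
  ¬ G.ContainsSubdivision (completeBipartiteGraph (Fin 3) (Fin 3))

/-- If `I` is an irreducible ideal and `G_I(Λ)` has at least 3
vertices, then `G_I(Λ)` is not complete. -/
theorem semigroupGraph_not_complete (Λ I : Set ℕ)
    (hΛ : IsNumericalSemigroup Λ) (hI : IsIrreducibleIdeal Λ I)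
    (h3 : 3 ≤ ((Λ \ I) \ {0}).ncard) :
    semigroupGraph Λ I ≠ ⊤ := by
  intro htop
  obtain ⟨⟨hIne, hIsub, hIcl⟩, hIrr⟩ := hI
  set S := (Λ \ I) \ {0} with hS
  -- complete graph: distinct vertices sum into I
  have key : ∀ x ∈ S, ∀ y ∈ S, x ≠ y → x + y ∈ I := by
    intro x hx y hy hxy
    have h : (semigroupGraph Λ I).Adj ⟨x, hx⟩ ⟨y, hy⟩ := by
      rw [htop]; simp [hxy]
    exact h.2
  -- basic membership facts
  have hmem : ∀ x ∈ S, x ∈ Λ ∧ x ∉ I ∧ x ≠ 0 := by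
    intro x hx
    exact ⟨hx.1.1, hx.1.2, hx.2⟩
  -- three distinct elements
  obtain ⟨t, hts, htc⟩ := Set.exists_subset_card_eq h3
  obtain ⟨a, b, c, hab, hac, hbc, rfl⟩ := Set.ncard_eq_three.mp htc
  have ha : a ∈ S := hts (by simp)
  have hb : b ∈ S := hts (by simp)
  have hc : c ∈ S := hts (by simp)
  -- pick a good pair x y with x ≠ y, x ≠ 2y, y ≠ 2x
  have ha0 := (hmem a ha).2.2
  have hb0 := (hmem b hb).2.2
  have hc0 := (hmem c hc).2.2
  obtain ⟨x, hx, y, hy, hxy, hx2y, hy2x⟩ :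
      ∃ x ∈ S, ∃ y ∈ S, x ≠ y ∧ x ≠ 2 * y ∧ y ≠ 2 * x := by
    by_cases h1 : a ≠ 2 * b ∧ b ≠ 2 * a
    · exact ⟨a, ha, b, hb, hab, h1.1, h1.2⟩
    by_cases h2 : a ≠ 2 * c ∧ c ≠ 2 * a
    · exact ⟨a, ha, c, hc, hac, h2.1, h2.2⟩
    refine ⟨b, hb, c, hc, hbc, ?_, ?_⟩ <;> omega
  obtain ⟨hxΛ, hxI, hx0⟩ := hmem x hx
  obtain ⟨hyΛ, hyI, hy0⟩ := hmem y hy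
  obtain ⟨h0Λ, hΛcl, -⟩ := hΛ
  -- the two ideals
  set J : Set ℕ := I ∪ {n | ∃ s ∈ Λ, n = x + s} with hJ
  set K : Set ℕ := I ∪ {n | ∃ s ∈ Λ, n = y + s} with hK
  -- general lemma about membership in x + Λ but not I
  have cases_lem : ∀ z ∈ S, ∀ w, (∃ s ∈ Λ, w = z + s) → w ∉ I → w = z ∨ w = 2 * z := by
    rintro z hz w ⟨s, hsΛ, rfl⟩ hwI
    rcases eq_or_ne s 0 with rfl | hs0
    · left; omega
    by_cases hsI : s ∈ I
    · exact absurd (by have := hIcl s hsI z (hmem z hz).1; rwa [add_comm] at this) hwI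
    rcases eq_or_ne s z with rfl | hsz
    · right; omega
    · have hsS : s ∈ S := ⟨⟨hsΛ, hsI⟩, hs0⟩
      exact absurd (key z hz s hsS (Ne.symm hsz)) hwI
  have idealJ : ∀ z : ℕ, z ∈ Λ → IsIdeal Λ (I ∪ {n | ∃ s ∈ Λ, n = z + s}) := by
    intro z hzΛ
    refine ⟨hIne.mono Set.subset_union_left, ?_, ?_⟩
    · rintro n (hn | ⟨s, hsΛ, rfl⟩)
      · exact hIsub hn
      · exact hΛcl z hzΛ s hsΛ
    · rintro n (hn | ⟨s, hsΛ, rfl⟩) u huΛ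
      · exact Or.inl (hIcl n hn u huΛ)
      · exact Or.inr ⟨s + u, hΛcl s hsΛ u huΛ, by ring⟩
  have notmem : ∀ z ∈ S, ∀ v ∈ S, z ≠ v → v ≠ 2 * z → v ∉ I ∪ {n | ∃ s ∈ Λ, n = z + s} := by
    rintro z hz v hv hzv hv2z (hvI | hvrep)
    · exact (hmem v hv).2.1 hvI
    · rcases cases_lem z hz v hvrep (hmem v hv).2.1 with h | h
      · exact hzv h.symm
      · exact hv2z h
  refine hIrr ⟨J, K, idealJ x hxΛ, idealJ y hyΛ, ?_, ?_, ?_, ?_, ?_⟩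
  · intro hJΛ
    exact notmem x hx y hy hxy hy2x (by rw [← hJ, hJΛ]; exact hyΛ)
  · intro hKΛ
    exact notmem y hy x hx (Ne.symm hxy) hx2y (by rw [← hK, hKΛ]; exact hxΛ)
  · exact ⟨Set.subset_union_left, fun hsub =>
      hxI (hsub (Set.mem_union_right _ ⟨0, h0Λ, (add_zero _).symm⟩))⟩
  · exact ⟨Set.subset_union_left, fun hsub =>
      hyI (hsub (Set.mem_union_right _ ⟨0, h0Λ, (add_zero _).symm⟩))⟩
  · apply Set.Subset.antisymm
    · exact Set.subset_inter Set.subset_union_left Set.subset_union_left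
    · rintro w ⟨hwJ, hwK⟩
      by_contra hwI
      have h1 : w = x ∨ w = 2 * x := by
        rcases hwJ with h | h
        · exact absurd h hwI
        · exact cases_lem x hx w h hwI
      have h2 : w = y ∨ w = 2 * y := by
        rcases hwK with h | h
        · exact absurd h hwI
        · exact cases_lem y hy w h hwI
      omega
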